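/- Let p be an odd prime, let β ≥ 1 be an integer, and let a be an integer with 1 ≤ a ≤ p^β. Then the number of integers x with 1 ≤ x ≤ p^β and x² ≡ a (mod p^β) is at most 2·p^{ν_p(a)/2}, where ν_p(a) is the largest integer ν such that p^ν divides a. -/

import Mathlib

/-- Each residue class mod `m` has at most `c` elements in `[1, N]` when `N ≤ m * c`. -/
lemma count_class_aux (m c N : ℕ) (hm : 0 < m) (hN : N ≤ m * c) (r : ℤ) :
    {x : ℕ | 1 ≤ x ∧ x ≤ N ∧ (m : ℤ) ∣ (x : ℤ) - r}.ncard ≤ c := by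
  have h1 : {x : ℕ | 1 ≤ x ∧ x ≤ N ∧ (m : ℤ) ∣ (x : ℤ) - r}.ncard ≤ (Set.Iio c).ncard := by
    apply Set.ncard_le_ncard_of_injOn (fun x => (x - 1) / m)
    · rintro x ⟨hx1, hx2, -⟩
      simp only [Set.mem_Iio]
      rw [Nat.div_lt_iff_lt_mul hm, mul_comm c m]
      omega
    · rintro x ⟨hx1, hx2, hx3⟩ y ⟨hy1, hy2, hy3⟩ hxy
      simp only at hxy
      have hdvd : (m : ℤ) ∣ (x : ℤ) - (y : ℤ) := by
        have := dvd_sub hx3 hy3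
        simpa using this
      have hmx := Nat.div_add_mod (x - 1) m
      have hmy := Nat.div_add_mod (y - 1) m
      rw [hxy] at hmx
      have hrx : (x - 1) % m < m := Nat.mod_lt _ hm
      have hry : (y - 1) % m < m := Nat.mod_lt _ hm
      have habs : |(x : ℤ) - (y : ℤ)| < (m : ℤ) := by
        rw [abs_lt]
        omega
      have := Int.eq_zero_of_abs_lt_dvd hdvd habs
      omega
  rwa [← Finset.coe_Iio, Set.ncard_coe_finset, Nat.card_Iio] at h1

/-- Key divisibility lemma: if `p^k` exactly divides `e` (i.e. not `p^(k+1)`),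
`p^k ∣ d` and `p^(k+k+n) ∣ d * e`, then `p^(k+n) ∣ d`. -/
lemma aux_dvd {p : ℤ} (hp : Prime p) (k n : ℕ) {d e : ℤ} (hdk : p ^ k ∣ d)
    (hek : p ^ k ∣ e) (he : ¬ p ^ (k + 1) ∣ e) (h : p ^ (k + k + n) ∣ d * e) :
    p ^ (k + n) ∣ d := by
  obtain ⟨d', rfl⟩ := hdk
  obtain ⟨e', rfl⟩ := hek
  have hne : ¬ p ∣ e' := by
    intro hc
    exact he (by rw [pow_succ]; exact mul_dvd_mul_left _ hc)
  have h2 : p ^ n ∣ d' * e' := by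
    have key : p ^ k * d' * (p ^ k * e') = p ^ (k + k) * (d' * e') := by
      rw [pow_add]; ring
    rw [key, pow_add] at h
    exact (mul_dvd_mul_iff_left (pow_ne_zero (k + k) hp.ne_zero)).mp h
  have h3 : p ^ n ∣ d' := hp.pow_dvd_of_dvd_mul_right n hne h2
  rw [pow_add]
  exact mul_dvd_mul_left _ h3

/-- If `x ∈ [1, p^β]` satisfies `x² ≡ a (mod p^β)` with `ν := padicValNat p a < β`,
then `2 * padicValNat p x = ν`. -/
lemma val_of_sol (p : ℕ) (hp : p.Prime) (β a : ℕ) (ha0 : a ≠ 0)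
    (hν : padicValNat p a < β) (x : ℕ) (hx1 : 1 ≤ x) (hx3 : x ^ 2 ≡ a [MOD p ^ β]) :
    2 * padicValNat p x = padicValNat p a := by
  haveI : Fact p.Prime := ⟨hp⟩
  set ν := padicValNat p a with hνdef
  have hx0 : x ≠ 0 := by omega
  have hx20 : x ^ 2 ≠ 0 := pow_ne_zero 2 hx0
  -- p^ν ∣ x^2
  have h1 : p ^ ν ∣ x ^ 2 := by
    have hmod : x ^ 2 ≡ a [MOD p ^ ν] := hx3.of_dvd (pow_dvd_pow p hν.le)
    have hdvd : p ^ ν ∣ a := pow_padicValNat_dvd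
    have : a ≡ 0 [MOD p ^ ν] := (Nat.modEq_zero_iff_dvd).mpr hdvd
    exact (Nat.modEq_zero_iff_dvd).mp (hmod.trans this)
  -- ¬ p^(ν+1) ∣ x^2
  have h2 : ¬ p ^ (ν + 1) ∣ x ^ 2 := by
    intro hc
    have hmod : x ^ 2 ≡ a [MOD p ^ (ν + 1)] := hx3.of_dvd (pow_dvd_pow p hν)
    have : (0 : ℕ) ≡ a [MOD p ^ (ν + 1)] :=
      (((Nat.modEq_zero_iff_dvd).mpr hc).symm.trans hmod)
    have : p ^ (ν + 1) ∣ a := (Nat.modEq_zero_iff_dvd).mp this.symm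
    exact pow_succ_padicValNat_not_dvd ha0 this
  have hval : padicValNat p (x ^ 2) = ν := by
    have hle : ν ≤ padicValNat p (x ^ 2) := (padicValNat_dvd_iff_le hx20).mp h1
    have hge : padicValNat p (x ^ 2) < ν + 1 := by
      by_contra hc
      exact h2 ((padicValNat_dvd_iff_le hx20).mpr (by omega))
    omega
  rw [padicValNat.pow x 2] at hval
  exact hval

/-- For an odd prime `p`, `β ≥ 1`, and `1 ≤ a ≤ p^β`, the number of `x` with
`1 ≤ x ≤ p^β` and `x² ≡ a (mod p^β)` is at most `2·p^{ν_p(a)/2}`. -/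
theorem count_sqrt_mod_prime_pow (p : ℕ) (hp : p.Prime) (hodd : Odd p)
    (β : ℕ) (hβ : 1 ≤ β) (a : ℕ) (ha1 : 1 ≤ a) (ha2 : a ≤ p ^ β) :
    ({x : ℕ | 1 ≤ x ∧ x ≤ p ^ β ∧ x ^ 2 ≡ a [MOD p ^ β]}.ncard : ℝ)
      ≤ 2 * (p : ℝ) ^ ((padicValNat p a : ℝ) / 2) := by
  haveI : Fact p.Prime := ⟨hp⟩
  set S : Set ℕ := {x : ℕ | 1 ≤ x ∧ x ≤ p ^ β ∧ x ^ 2 ≡ a [MOD p ^ β]} with hSdef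
  set ν := padicValNat p a with hνdef
  have hp1 : 1 < p := hp.one_lt
  have ha0 : a ≠ 0 := by omega
  have hpI : Prime (p : ℤ) := Int.prime_iff_natAbs_prime.mpr (by simpa)
  -- reduce to a natural-number bound
  suffices h : ∃ k : ℕ, 2 * k ≤ ν ∧ S.ncard ≤ 2 * p ^ k by
    obtain ⟨k, hk1, hk2⟩ := h
    have hstep : ((2 * p ^ k : ℕ) : ℝ) ≤ 2 * (p : ℝ) ^ ((ν : ℝ) / 2) := by
      push_cast
      have h1 : (p : ℝ) ^ (k : ℕ) = (p : ℝ) ^ ((k : ℕ) : ℝ) :=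
        (Real.rpow_natCast _ _).symm
      rw [h1]
      have h2 : ((k : ℕ) : ℝ) ≤ (ν : ℝ) / 2 := by
        rw [le_div_iff₀ (by norm_num)]
        exact_mod_cast by exact_mod_cast (by omega : (k * 2 : ℕ) ≤ ν)
      have h3 : (p : ℝ) ^ ((k : ℕ) : ℝ) ≤ (p : ℝ) ^ ((ν : ℝ) / 2) :=
        Real.rpow_le_rpow_of_exponent_le (by exact_mod_cast hp1.le) h2
      linarith
    calc (S.ncard : ℝ) ≤ ((2 * p ^ k : ℕ) : ℝ) := by exact_mod_cast hk2
      _ ≤ 2 * (p : ℝ) ^ ((ν : ℝ) / 2) := hstep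
  -- finiteness of residue-class sets
  have hCfin : ∀ m : ℕ, ∀ r : ℤ,
      {x : ℕ | 1 ≤ x ∧ x ≤ p ^ β ∧ (m : ℤ) ∣ (x : ℤ) - r}.Finite := fun m r =>
    Set.Finite.subset (Set.finite_Icc 1 (p ^ β))
      (fun x hx => Set.mem_Icc.mpr ⟨hx.1, hx.2.1⟩)
  by_cases hcase : β ≤ ν
  · -- case a divisible by p^β : all solutions divisible by p^⌈β/2⌉
    refine ⟨β / 2, by omega, ?_⟩
    set k := β / 2 with hk
    have hsub : S ⊆ {x : ℕ | 1 ≤ x ∧ x ≤ p ^ β ∧ ((p ^ (β - k) : ℕ) : ℤ) ∣ (x : ℤ) - 0} := by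
      rintro x ⟨hx1, hx2, hx3⟩
      refine ⟨hx1, hx2, ?_⟩
      have hx0 : x ≠ 0 := by omega
      have hdvd : p ^ β ∣ a := (padicValNat_dvd_iff_le ha0).mpr hcase
      have h1 : p ^ β ∣ x ^ 2 := by
        have : a ≡ 0 [MOD p ^ β] := (Nat.modEq_zero_iff_dvd).mpr hdvd
        exact (Nat.modEq_zero_iff_dvd).mp (hx3.trans this)
      have h2 : β ≤ padicValNat p (x ^ 2) :=
        (padicValNat_dvd_iff_le (pow_ne_zero 2 hx0)).mp h1
      rw [padicValNat.pow x 2] at h2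
      have h3 : p ^ (β - k) ∣ x := (padicValNat_dvd_iff_le hx0).mpr (by omega)
      rw [sub_zero]
      exact_mod_cast Int.natCast_dvd_natCast.mpr h3
    have hcount : {x : ℕ | 1 ≤ x ∧ x ≤ p ^ β ∧ ((p ^ (β - k) : ℕ) : ℤ) ∣ (x : ℤ) - 0}.ncard
        ≤ p ^ k := by
      apply count_class_aux _ _ _ (pow_pos (by omega) _)
      rw [← pow_add]
      exact le_of_eq (by congr 1; omega)
    have := (Set.ncard_le_ncard hsub (hCfin _ _)).trans hcount
    omega
  · push_neg at hcase
    rcases S.eq_empty_or_nonempty with hS | ⟨x₀, hx₀⟩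
    · exact ⟨0, by omega, by simp [hS]⟩
    obtain ⟨hx₀1, hx₀2, hx₀3⟩ := hx₀
    set k := padicValNat p x₀ with hkdef
    have hνk : 2 * k = ν := val_of_sol p hp β a ha0 hcase x₀ hx₀1 hx₀3
    refine ⟨k, by omega, ?_⟩
    set m := p ^ (β - k) with hm
    -- every solution is ≡ x₀ or ≡ -x₀ mod m
    have hsub : S ⊆ {x : ℕ | 1 ≤ x ∧ x ≤ p ^ β ∧ (m : ℤ) ∣ (x : ℤ) - (x₀ : ℤ)}
        ∪ {x : ℕ | 1 ≤ x ∧ x ≤ p ^ β ∧ (m : ℤ) ∣ (x : ℤ) - (-(x₀ : ℤ))} := by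
      rintro x ⟨hx1, hx2, hx3⟩
      have hx0 : x ≠ 0 := by omega
      have hvx : padicValNat p x = k := by
        have := val_of_sol p hp β a ha0 hcase x hx1 hx3
        omega
      -- p^k divides x and x₀, p^(k+1) divides neither
      have hdx : (p : ℤ) ^ k ∣ (x : ℤ) := by
        exact_mod_cast Int.natCast_dvd_natCast.mpr
          ((padicValNat_dvd_iff_le hx0).mpr (le_of_eq hvx.symm))
      have hdx₀ : (p : ℤ) ^ k ∣ (x₀ : ℤ) := by
        exact_mod_cast Int.natCast_dvd_natCast.mpr
          ((padicValNat_dvd_iff_le (by omega)).mpr le_rfl)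
      have hndx : ¬ (p : ℤ) ^ (k + 1) ∣ (x : ℤ) := by
        intro hc
        have : p ^ (k + 1) ∣ x := by exact_mod_cast hc
        have := (padicValNat_dvd_iff_le hx0).mp this
        omega
      -- p^β ∣ (x - x₀)(x + x₀)
      have hde : (p : ℤ) ^ β ∣ ((x : ℤ) - x₀) * ((x : ℤ) + x₀) := by
        have hmm : x₀ ^ 2 ≡ x ^ 2 [MOD p ^ β] := hx₀3.trans hx3.symm
        have hd := hmm.dvd
        push_cast at hd
        have key : ((x : ℤ) - x₀) * ((x : ℤ) + x₀) = (x : ℤ) ^ 2 - (x₀ : ℤ) ^ 2 := by ring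
        rw [key]
        exact hd
      have hβeq : β = k + k + (β - 2 * k) := by omega
      rw [hβeq] at hde
      -- not both x - x₀ and x + x₀ divisible by p^(k+1)
      have hnotboth : ¬ ((p : ℤ) ^ (k + 1) ∣ ((x : ℤ) - x₀)
          ∧ (p : ℤ) ^ (k + 1) ∣ ((x : ℤ) + x₀)) := by
        rintro ⟨h1, h2⟩
        have hsum : (p : ℤ) ^ (k + 1) ∣ 2 * (x : ℤ) := by
          have := dvd_add h1 h2
          have key : ((x : ℤ) - x₀) + ((x : ℤ) + x₀) = 2 * (x : ℤ) := by ring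
          rwa [key] at this
        have hp2 : ¬ (p : ℤ) ∣ 2 := by
          intro hc
          have : p ∣ 2 := by exact_mod_cast hc
          have := Nat.le_of_dvd (by norm_num) this
          rcases hodd with ⟨t, ht⟩
          omega
        exact hndx (hpI.pow_dvd_of_dvd_mul_left (k + 1) hp2 hsum)
      have hdd : (p : ℤ) ^ k ∣ (x : ℤ) - x₀ := dvd_sub hdx hdx₀
      have hdsum : (p : ℤ) ^ k ∣ (x : ℤ) + x₀ := dvd_add hdx hdx₀
      by_cases hside : (p : ℤ) ^ (k + 1) ∣ ((x : ℤ) + x₀)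
      · -- then x - x₀ not divisible by p^(k+1); show m ∣ x + x₀
        have hnd : ¬ (p : ℤ) ^ (k + 1) ∣ ((x : ℤ) - x₀) := fun hc => hnotboth ⟨hc, hside⟩
        right
        refine ⟨hx1, hx2, ?_⟩
        rw [sub_neg_eq_add]
        rw [mul_comm ((x : ℤ) - x₀)] at hde
        have := aux_dvd hpI k (β - 2 * k) hdsum hdd hnd hde
        have hexp : k + (β - 2 * k) = β - k := by omega
        rw [hexp] at this
        rw [hm]
        push_cast
        exact this
      · left
        refine ⟨hx1, hx2, ?_⟩
        have := aux_dvd hpI k (β - 2 * k) hdd hdsum hside hde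
        have hexp : k + (β - 2 * k) = β - k := by omega
        rw [hexp] at this
        rw [hm]
        push_cast
        exact this
    have hmc : p ^ β ≤ m * p ^ k := by
      rw [hm, ← pow_add]
      exact le_of_eq (by congr 1; omega)
    have hc1 : {x : ℕ | 1 ≤ x ∧ x ≤ p ^ β ∧ (m : ℤ) ∣ (x : ℤ) - (x₀ : ℤ)}.ncard ≤ p ^ k :=
      count_class_aux m (p ^ k) (p ^ β) (pow_pos (by omega) _) hmc _
    have hc2 : {x : ℕ | 1 ≤ x ∧ x ≤ p ^ β ∧ (m : ℤ) ∣ (x : ℤ) - (-(x₀ : ℤ))}.ncard ≤ p ^ k :=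
      count_class_aux m (p ^ k) (p ^ β) (pow_pos (by omega) _) hmc _
    have hfin : ({x : ℕ | 1 ≤ x ∧ x ≤ p ^ β ∧ (m : ℤ) ∣ (x : ℤ) - (x₀ : ℤ)}
        ∪ {x : ℕ | 1 ≤ x ∧ x ≤ p ^ β ∧ (m : ℤ) ∣ (x : ℤ) - (-(x₀ : ℤ))}).Finite :=
      Set.Finite.union (hCfin _ _) (hCfin _ _)
    have := (Set.ncard_le_ncard hsub hfin).trans
      ((Set.ncard_union_le _ _).trans (add_le_add hc1 hc2))
    omega
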